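/- On the alphabet A = {0,1}, the subshift Σ = {0^p·1·0^ω : p ∈ ℕ} ∪ {1^p·0^ω : p ∈ ℕ} ∪ {1^ω} (the subshift (0^*1 + 1^*)0^ω) is neither a subshift of finite type nor T2, but it is both T1 and T3; consequently Σ is traceable. -/

import Mathlib

variable {A : Type*}

/-- The onesided shift on `A^ℕ`. -/
def shiftN (z : ℕ → A) : ℕ → A := fun i => z (i + 1)

/-- The twosided shift on `A^ℤ`. -/
def shiftZ (x : ℤ → A) : ℤ → A := fun i => x (i + 1)

/-- A (onesided) subshift: a closed, shift-stable set of infinite words. -/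
def IsSubshift [TopologicalSpace A] (S : Set (ℕ → A)) : Prop :=
  IsClosed S ∧ ∀ z ∈ S, shiftN z ∈ S

/-- A 2-SFT: a subshift given by a set of forbidden words of length 2. -/
def IsTwoSFT (S : Set (ℕ → A)) : Prop :=
  ∃ Fb : Set (A × A), S = {z | ∀ i : ℕ, (z i, z (i + 1)) ∉ Fb}

/-- A k-SFT: a subshift given by a set of forbidden words of length k. -/
def IsKSFT (k : ℕ) (S : Set (ℕ → A)) : Prop :=
  ∃ Fb : Set (Fin k → A), S = {z | ∀ i : ℕ, (fun j : Fin k => z (i + (j : ℕ))) ∉ Fb}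

/-- A subshift of finite type. -/
def IsSFT (S : Set (ℕ → A)) : Prop := ∃ k : ℕ, IsKSFT k S

/-- A cellular automaton: a continuous self-map of `A^ℤ` commuting with the shift. -/
def IsCA [TopologicalSpace A] (F : (ℤ → A) → (ℤ → A)) : Prop :=
  Continuous F ∧ ∀ x, F (shiftZ x) = shiftZ (F x)

/-- The trace of `F` with initial condition `x`: the 0th column of the space-time diagram. -/
def caTrace (F : (ℤ → A) → (ℤ → A)) (x : ℤ → A) : ℕ → A := fun j => F^[j] x 0

/-- The trace subshift of `F`. -/
def traceSubshift (F : (ℤ → A) → (ℤ → A)) : Set (ℕ → A) := Set.range (caTrace F)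

/-- A subshift is traceable if it is the trace subshift of some CA. -/
def Traceable [TopologicalSpace A] (S : Set (ℕ → A)) : Prop :=
  ∃ F : (ℤ → A) → (ℤ → A), IsCA F ∧ traceSubshift F = S

/-- The q-th projection of an infinite word over the alphabet `A^k`. -/
def proj {k : ℕ} (q : Fin k) (z : ℕ → (Fin k → A)) : ℕ → A := fun j => z j q

/-- `π(Γ)`: the union of all projections. -/
def projAll {k : ℕ} (Γ : Set (ℕ → (Fin k → A))) : Set (ℕ → A) :=
  ⋃ q : Fin k, proj q '' Γ

/-- A subshift `S` on `A` is T1 if there is a 2-SFT `Γ ⊆ (A^k)^ℕ` with `π₀(Γ) = π(Γ) = S`. -/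
def IsT1 (S : Set (ℕ → A)) : Prop :=
  ∃ k : ℕ, ∃ hk : 0 < k, ∃ Γ : Set (ℕ → (Fin k → A)),
    IsTwoSFT Γ ∧ proj (⟨0, hk⟩ : Fin k) '' Γ = S ∧ projAll Γ = S

/-- A onesided CA: one admitting a local rule of anchor 0. -/
def IsOnesidedCA {C : Type*} (F : (ℤ → C) → (ℤ → C)) : Prop :=
  ∃ d : ℕ, ∃ f : (Fin d → C) → C, ∀ x i, F x i = f (fun j => x (i + (j : ℕ)))

/-- `S` is the k-trace of a onesided CA on some alphabet `B ⊆ A^k`. -/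
def KTraceable (k : ℕ) (S : Set (ℕ → A)) : Prop :=
  ∃ B : Set (Fin k → A), ∃ F : (ℤ → ↥B) → (ℤ → ↥B), IsOnesidedCA F ∧
    S = ⋃ q : Fin k, (fun z : ℕ → ↥B => fun j => ((z j : Fin k → A) q)) '' Set.range (caTrace F)

/-- `S` is a factor of `Γ`: a surjective continuous shift-commuting map from `Γ` onto `S`. -/
def IsFactorOf {B : Type*} [TopologicalSpace A] [TopologicalSpace B]
    (S : Set (ℕ → A)) (Γ : Set (ℕ → B)) : Prop :=
  ∃ φ : (ℕ → B) → (ℕ → A), ContinuousOn φ Γ ∧ φ '' Γ = S ∧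
    ∀ z ∈ Γ, φ (shiftN z) = shiftN (φ z)

/-- The language of a subshift: all finite factors of its elements. -/
def lang (S : Set (ℕ → A)) : Language A :=
  {w | ∃ z ∈ S, ∃ i : ℕ, w = List.ofFn (fun j : Fin w.length => z (i + (j : ℕ)))}

/-- A transitive subshift. -/
def IsTransitiveSubshift (S : Set (ℕ → A)) : Prop :=
  ∀ u ∈ lang S, ∀ v ∈ lang S, ∃ w : List A, u ++ w ++ v ∈ lang S

/-- A T2 subshift: sofic, and including an infinite transitive subshift. -/
def IsT2 [TopologicalSpace A] (S : Set (ℕ → A)) : Prop :=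
  (lang S).IsRegular ∧ ∃ Γ ⊆ S, IsSubshift Γ ∧ Γ.Infinite ∧ IsTransitiveSubshift Γ

/-- `B^ω`: infinite concatenations of words from `B ⊆ A^k`. -/
def Bomega {k : ℕ} (B : Set (Fin k → A)) : Set (ℕ → A) :=
  {z | ∀ i : ℕ, (fun q : Fin k => z (i * k + (q : ℕ))) ∈ B}

/-- A T3 subshift: T0 via a map `φ`, together with a periodic word `w ∉ φ(A)^*`. -/
def IsT3 (S : Set (ℕ → A)) : Prop :=
  ∃ φ : A → A, (∀ a : A, (fun j => φ^[j] a) ∈ S) ∧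
    ∃ w : List A, w ≠ [] ∧ (∃ a ∈ w, a ∉ Set.range φ) ∧
      ∃ z ∈ S, (∀ j : ℕ, z (j + w.length) = z j) ∧ ∀ i : Fin w.length, z (i : ℕ) = w.get i

/-- `0^p·1·0^ω` over `{0,1}`. -/
def wOneAt (p : ℕ) : ℕ → Fin 2 := fun j => if j = p then 1 else 0
/-- `1^p·0^ω` over `{0,1}`. -/
def wOnesThenZeros (p : ℕ) : ℕ → Fin 2 := fun j => if j < p then 1 else 0
/-- `1^ω` over `{0,1}`. -/
def wOnes : ℕ → Fin 2 := fun _ => 1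

/-- The subshift `(0^*1 + 1^*)0^ω` on `{0,1}`. -/
def SigmaEx : Set (ℕ → Fin 2) :=
  {z | ∃ p : ℕ, z = wOneAt p} ∪ {z | ∃ p : ℕ, z = wOnesThenZeros p} ∪ {wOnes}

section Helpers

lemma fin2_cases (a : Fin 2) : a = 0 ∨ a = 1 := by omega

lemma ite10_eq_one {c : Prop} [Decidable c] : (if c then (1:Fin 2) else 0) = 1 ↔ c := by
  split <;> simp_all

lemma ite10_eq_zero {c : Prop} [Decidable c] : (if c then (1:Fin 2) else 0) = 0 ↔ ¬ c := by
  split <;> simp_all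

lemma wOneAt_one {p i : ℕ} : wOneAt p i = 1 ↔ i = p := by simp [wOneAt, ite10_eq_one]
lemma wOneAt_zero {p i : ℕ} : wOneAt p i = 0 ↔ i ≠ p := by simp [wOneAt, ite10_eq_zero]
lemma wOTZ_one {p i : ℕ} : wOnesThenZeros p i = 1 ↔ i < p := by
  simp [wOnesThenZeros, ite10_eq_one]
lemma wOTZ_zero {p i : ℕ} : wOnesThenZeros p i = 0 ↔ ¬ i < p := by
  simp [wOnesThenZeros, ite10_eq_zero]

lemma mem_SigmaEx_oneAt (p : ℕ) : wOneAt p ∈ SigmaEx := Or.inl (Or.inl ⟨p, rfl⟩)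
lemma mem_SigmaEx_otz (p : ℕ) : wOnesThenZeros p ∈ SigmaEx := Or.inl (Or.inr ⟨p, rfl⟩)
lemma mem_SigmaEx_ones : wOnes ∈ SigmaEx := Or.inr rfl

/-- Characterization of membership in SigmaEx. -/
lemma mem_SigmaEx_of_char (z : ℕ → Fin 2)
    (h1 : ∀ i, z i = 1 → z (i+1) = 0 → ∀ j, z (i+1+j) = 0)
    (h2 : ∀ i, z i = 0 → z (i+1) = 1 → ∀ j, z (i+2+j) = 0) :
    z ∈ SigmaEx := by
  classical
  by_cases hd : ∃ i, z i = 1 ∧ z (i+1) = 0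
  · -- there is a descent; take the least one
    have hdd : ∃ i, z i = 1 ∧ z (i+1) = 0 := hd
    set t := Nat.find hdd with ht
    obtain ⟨htz, htz1⟩ := Nat.find_spec hdd
    have hmin : ∀ s < t, ¬ (z s = 1 ∧ z (s+1) = 0) := fun s hs => Nat.find_min hdd hs
    have htail : ∀ j, z (t+1+j) = 0 := h1 t htz htz1
    have htail' : ∀ j, t < j → z j = 0 := by
      intro j hj
      have := htail (j - (t+1))
      rwa [show t+1+(j-(t+1)) = j by omega] at this
    rcases fin2_cases (z 0) with hz0 | hz0
    · -- z 0 = 0 : z = wOneAt t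
      have hpre : ∀ s, s < t → z s = 0 := by
        intro s hs
        induction s with
        | zero => exact hz0
        | succ n ih =>
          have hn : z n = 0 := ih (by omega)
          rcases fin2_cases (z (n+1)) with h | h
          · exact h
          · exfalso
            have htn : t ≥ n + 2 := by omega
            have := h2 n hn h (t - (n+2))
            rw [show n+2+(t-(n+2)) = t by omega] at this
            rw [this] at htz; exact absurd htz (by decide)
      left; left; refine ⟨t, funext fun j => ?_⟩
      rcases Nat.lt_trichotomy j t with h | h | h
      · rw [hpre j h, wOneAt, if_neg (by omega)]
      · subst h; rw [htz, wOneAt, if_pos rfl]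
      · rw [htail' j h, wOneAt, if_neg (by omega)]
    · -- z 0 = 1 : z = wOnesThenZeros (t+1)
      have hpre : ∀ s, s ≤ t → z s = 1 := by
        intro s hs
        induction s with
        | zero => exact hz0
        | succ n ih =>
          have hn : z n = 1 := ih (by omega)
          rcases fin2_cases (z (n+1)) with h | h
          · exact absurd ⟨hn, h⟩ (hmin n (by omega))
          · exact h
      left; right; refine ⟨t+1, funext fun j => ?_⟩
      rcases Nat.lt_or_ge j (t+1) with h | h
      · rw [hpre j (by omega), wOnesThenZeros, if_pos h]
      · rw [htail' j (by omega), wOnesThenZeros, if_neg (by omega)]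
  · -- no descent: z nondecreasing along indices
    push_neg at hd
    have hnd : ∀ i, z i = 1 → z (i+1) = 1 := by
      intro i hi
      rcases fin2_cases (z (i+1)) with h | h
      · exact absurd h (hd i hi)
      · exact h
    by_cases hz : ∃ i, z i = 1
    · obtain ⟨i, hi⟩ := hz
      rcases fin2_cases (z 0) with hz0 | hz0
      · exfalso
        have hone : ∃ n, z n = 1 := ⟨i, hi⟩
        have htz : z (Nat.find hone) = 1 := Nat.find_spec hone
        have ht0 : Nat.find hone ≠ 0 := by
          intro h; rw [h, hz0] at htz; exact absurd htz (by decide)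
        have hts : Nat.find hone - 1 + 1 = Nat.find hone := by omega
        have hzs : z (Nat.find hone - 1) = 0 := by
          rcases fin2_cases (z (Nat.find hone - 1)) with h | h
          · exact h
          · exact absurd h (Nat.find_min hone (by omega))
        have htz' : z (Nat.find hone - 1 + 1) = 1 := by rw [hts]; exact htz
        have h0 := h2 (Nat.find hone - 1) hzs htz' 0
        have h1' := hnd (Nat.find hone) htz
        rw [show Nat.find hone - 1 + 2 + 0 = Nat.find hone + 1 by omega] at h0
        rw [h0] at h1'; exact absurd h1' (by decide)
      · right
        have : ∀ j, z j = 1 := by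
          intro j; induction j with
          | zero => exact hz0
          | succ n ih => exact hnd n ih
        exact funext this
    · push_neg at hz
      left; right; refine ⟨0, funext fun j => ?_⟩
      rcases fin2_cases (z j) with h | h
      · rw [h, wOnesThenZeros, if_neg (by omega)]
      · exact absurd h (hz j)

end Helpers

section NotSFT

lemma not_sft : ¬ IsSFT SigmaEx := by
  rintro ⟨k, Fb, hS⟩
  -- the witness word with two ones separated by k+1 zeros
  set zz : ℕ → Fin 2 := fun j => if j = 0 ∨ j = k+2 then 1 else 0 with hzz
  have hwin : ∀ p : ℕ, ∀ i : ℕ, (fun j : Fin k => wOneAt p (i + (j:ℕ))) ∉ Fb := by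
    intro p i
    have : wOneAt p ∈ {z : ℕ → Fin 2 | ∀ i : ℕ, (fun j : Fin k => z (i + (j:ℕ))) ∉ Fb} := by
      rw [← hS]; exact mem_SigmaEx_oneAt p
    exact this i
  have hzmem : zz ∈ SigmaEx := by
    rw [hS]
    intro i
    by_cases hi : i = 0
    · subst hi
      have heq : (fun j : Fin k => zz (0 + (j:ℕ))) = (fun j : Fin k => wOneAt 0 (0 + (j:ℕ))) := by
        funext j
        have hj : (j:ℕ) < k := j.isLt
        simp only [hzz, wOneAt]
        by_cases h0 : (0:ℕ) + (j:ℕ) = 0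
        · rw [if_pos (by omega), if_pos (by omega)]
        · rw [if_neg (by omega), if_neg (by omega)]
      rw [heq]; exact hwin 0 0
    · have heq : (fun j : Fin k => zz (i + (j:ℕ))) = (fun j : Fin k => wOneAt (k+2) (i + (j:ℕ))) := by
        funext j
        simp only [hzz, wOneAt]
        by_cases h0 : i + (j:ℕ) = k + 2
        · rw [if_pos (by omega), if_pos (by omega)]
        · rw [if_neg (by omega), if_neg (by omega)]
      rw [heq]; exact hwin (k+2) i
  have hz0 : zz 0 = 1 := by simp [hzz]
  have hzk : zz (k+2) = 1 := by simp [hzz]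
  have hz1 : zz 1 = 0 := by simp only [hzz]; rw [if_neg (by omega)]
  rcases hzmem with (⟨p, hp⟩ | ⟨p, hp⟩) | hp
  · rw [hp] at hz0 hzk
    rw [wOneAt_one] at hz0 hzk
    omega
  · rw [hp] at hz0 hzk hz1
    rw [wOTZ_one] at hz0 hzk
    rw [wOTZ_zero] at hz1
    omega
  · rw [Set.mem_singleton_iff] at hp
    rw [hp] at hz1
    exact absurd hz1 (by decide)

end NotSFT

section NotT2

lemma descent_of_mem (z : ℕ → Fin 2) (hz : z ∈ SigmaEx)
    (h0 : z ≠ wOnesThenZeros 0) (h1 : z ≠ wOnes) :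
    ∃ i, z i = 1 ∧ z (i+1) = 0 := by
  rcases hz with (⟨p, hp⟩ | ⟨p, hp⟩) | hp
  · subst hp
    exact ⟨p, by rw [wOneAt_one], by rw [wOneAt_zero]; omega⟩
  · subst hp
    have hp0 : p ≠ 0 := fun h => h0 (by rw [h])
    exact ⟨p-1, by rw [wOTZ_one]; omega, by rw [wOTZ_zero]; omega⟩
  · exact absurd hp h1

lemma not_t2 : ¬ IsT2 SigmaEx := by
  rintro ⟨-, Γ, hΓsub, -, hinf, htrans⟩
  have hne : (Γ \ {wOnesThenZeros 0, wOnes}).Nonempty := by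
    apply Set.Infinite.nonempty
    exact Set.Infinite.diff hinf ((Set.finite_singleton wOnes).insert _)
  obtain ⟨z₁, hz₁Γ, hz₁ne⟩ := hne
  simp only [Set.mem_insert_iff, Set.mem_singleton_iff, not_or] at hz₁ne
  obtain ⟨i₀, hd1, hd0⟩ := descent_of_mem z₁ (hΓsub hz₁Γ) hz₁ne.1 hz₁ne.2
  have hu : ([1, 0] : List (Fin 2)) ∈ lang Γ := by
    refine ⟨z₁, hz₁Γ, i₀, ?_⟩
    have he : List.ofFn (fun j : Fin 2 => z₁ (i₀ + (j:ℕ))) = [z₁ (i₀ + 0), z₁ (i₀ + 1)] := by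
      simp [List.ofFn_succ]
    show ([1,0] : List (Fin 2)) = List.ofFn (fun j : Fin (List.length [1,0]) => z₁ (i₀ + (j:ℕ)))
    rw [show (List.length [(1:Fin 2),0]) = 2 from rfl, he]
    rw [show i₀ + 0 = i₀ from rfl, hd1, hd0]
  have hv : ([1] : List (Fin 2)) ∈ lang Γ := by
    refine ⟨z₁, hz₁Γ, i₀, ?_⟩
    have he : List.ofFn (fun j : Fin 1 => z₁ (i₀ + (j:ℕ))) = [z₁ (i₀ + 0)] := by
      simp [List.ofFn_succ]
    show ([1] : List (Fin 2)) = List.ofFn (fun j : Fin (List.length [1]) => z₁ (i₀ + (j:ℕ)))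
    rw [show (List.length [(1:Fin 2)]) = 1 from rfl, he]
    rw [show i₀ + 0 = i₀ from rfl, hd1]
  obtain ⟨w, z, hzΓ, i, hweq⟩ := htrans _ hu _ hv
  have hz : z ∈ SigmaEx := hΓsub hzΓ
  have hval : ∀ m (hm : m < (([1,0] : List (Fin 2)) ++ w ++ [1]).length),
      z (i + m) = (([1,0] : List (Fin 2)) ++ w ++ [1])[m] := by
    intro m hm
    have hm2 : m < (List.ofFn (fun j : Fin ((([1,0] : List (Fin 2)) ++ w ++ [1]).length) =>
        z (i + (j:ℕ)))).length := by simpa using hm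
    have h2 := List.getElem_ofFn hm2
    calc z (i + m) = _ := (h2).symm
      _ = (([1,0] : List (Fin 2)) ++ w ++ [1])[m] := by
          congr 1
          exact hweq.symm
  have hlen : (([1,0] : List (Fin 2)) ++ w ++ [1]).length = w.length + 3 := by simp
  have h0 : z (i + 0) = 1 := by rw [hval 0 (by omega)]; simp
  have h1 : z (i + 1) = 0 := by rw [hval 1 (by omega)]; simp
  have h2 : z (i + (w.length + 2)) = 1 := by
    rw [hval (w.length + 2) (by omega)]
    show (1 :: 0 :: (w ++ [1]))[w.length+2]'(by simp) = 1
    rw [List.getElem_cons_succ, List.getElem_cons_succ,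
      List.getElem_append_right (by omega)]
    simp
  rw [show i + 0 = i from rfl] at h0
  rcases hz with (⟨p, hp⟩ | ⟨p, hp⟩) | hp
  · subst hp
    rw [wOneAt_one] at h0 h2; omega
  · subst hp
    rw [wOTZ_one] at h0 h2
    rw [wOTZ_zero] at h1
    omega
  · rw [Set.mem_singleton_iff] at hp
    subst hp
    simp [wOnes] at h1

end NotT2

section T1Part

/-- Forbidden pairs for the T1 cover of SigmaEx. First track (index 0) carries the word,
second track (index 1) carries a monotone flag. -/
def FbT1 : Set ((Fin 2 → Fin 2) × (Fin 2 → Fin 2)) :=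
  {cc | (cc.1 1 = 0 ∧ cc.2 1 = 1) ∨ (cc.2 0 = 1 ∧ cc.1 1 = 0) ∨
    (cc.1 0 = 0 ∧ cc.2 0 = 1 ∧ cc.2 1 = 1) ∨ (cc.1 0 = 1 ∧ cc.2 0 = 0 ∧ cc.2 1 = 1)}

def GammaT1 : Set (ℕ → (Fin 2 → Fin 2)) := {z | ∀ i : ℕ, (z i, z (i + 1)) ∉ FbT1}

lemma gamma_mem_iff (v : ℕ → (Fin 2 → Fin 2)) :
    v ∈ GammaT1 ↔ ∀ i : ℕ,
      ¬(v i 1 = 0 ∧ v (i+1) 1 = 1) ∧ ¬(v (i+1) 0 = 1 ∧ v i 1 = 0) ∧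
      ¬(v i 0 = 0 ∧ v (i+1) 0 = 1 ∧ v (i+1) 1 = 1) ∧
      ¬(v i 0 = 1 ∧ v (i+1) 0 = 0 ∧ v (i+1) 1 = 1) := by
  constructor
  · intro h i
    have := h i
    simp only [FbT1, Set.mem_setOf_eq, not_or] at this
    exact this
  · intro h i
    simp only [FbT1, Set.mem_setOf_eq, not_or]
    exact h i

/-- A monotone (nonincreasing) binary word is in SigmaEx. -/
lemma mono_mem_SigmaEx (y : ℕ → Fin 2) (h : ∀ i, ¬(y i = 0 ∧ y (i+1) = 1)) :
    y ∈ SigmaEx := by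
  apply mem_SigmaEx_of_char
  · intro i hi hi1 j
    induction j with
    | zero => exact hi1
    | succ n ih =>
      rcases fin2_cases (y (i+1+n+1)) with hh | hh
      · rw [show i+1+(n+1) = i+1+n+1 by omega]; exact hh
      · exact absurd ⟨ih, hh⟩ (h (i+1+n))
  · intro i hi hi1
    exact absurd ⟨hi, hi1⟩ (h i)

/-- The first track of any element of GammaT1 is in SigmaEx. -/
lemma gamma_proj0_mem (v : ℕ → (Fin 2 → Fin 2)) (hv : v ∈ GammaT1) :
    (fun j => v j 0) ∈ SigmaEx := by
  rw [gamma_mem_iff] at hv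
  -- flag is monotone
  have hmono : ∀ i, v i 1 = 0 → ∀ j, v (i+j) 1 = 0 := by
    intro i hi j
    induction j with
    | zero => exact hi
    | succ n ih =>
      rcases fin2_cases (v (i+n+1) 1) with hh | hh
      · rw [show i+(n+1) = i+n+1 by omega]; exact hh
      · exact absurd ⟨ih, hh⟩ (hv (i+n)).1
  -- if the flag is off, the next letter is 0
  have hoff : ∀ i, v i 1 = 0 → v (i+1) 0 = 0 := by
    intro i hi
    rcases fin2_cases (v (i+1) 0) with hh | hh
    · exact hh
    · exact absurd ⟨hh, hi⟩ (hv i).2.1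
  apply mem_SigmaEx_of_char
  · -- descent at i : flag turns off at i+1
    intro i hi hi1 j
    have hy : v (i+1) 1 = 0 := by
      rcases fin2_cases (v (i+1) 1) with hh | hh
      · exact hh
      · exact absurd ⟨hi, hi1, hh⟩ (hv i).2.2.2
    induction j with
    | zero => exact hi1
    | succ n ih =>
      have : v (i+1+n) 1 = 0 := hmono (i+1) hy n
      have := hoff (i+1+n) this
      rw [show i+1+(n+1) = i+1+n+1 by omega]; exact this
  · -- ascent at i : flag off from i+1 on
    intro i hi hi1 j
    have hy : v (i+1) 1 = 0 := by
      rcases fin2_cases (v (i+1) 1) with hh | hh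
      · exact hh
      · exact absurd ⟨hi, hi1, hh⟩ (hv i).2.2.1
    have : v (i+1+j) 1 = 0 := hmono (i+1) hy j
    have := hoff (i+1+j) this
    rw [show i+2+j = i+1+j+1 by omega]; exact this

/-- The pairing map used for surjectivity. -/
def pairW (z y : ℕ → Fin 2) : ℕ → (Fin 2 → Fin 2) :=
  fun j => fun q => if q = 0 then z j else y j

lemma pairW_in_gamma (z y : ℕ → Fin 2)
    (hF1 : ∀ i, ¬(y i = 0 ∧ y (i+1) = 1))
    (hF2 : ∀ i, ¬(z (i+1) = 1 ∧ y i = 0))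
    (hF3 : ∀ i, ¬(z i = 0 ∧ z (i+1) = 1 ∧ y (i+1) = 1))
    (hF4 : ∀ i, ¬(z i = 1 ∧ z (i+1) = 0 ∧ y (i+1) = 1)) :
    pairW z y ∈ GammaT1 := by
  rw [gamma_mem_iff]
  intro i
  simp only [pairW, if_pos, if_neg (by decide : (1:Fin 2) ≠ 0)]
  exact ⟨hF1 i, hF2 i, hF3 i, hF4 i⟩

lemma surj_onto_SigmaEx (z : ℕ → Fin 2) (hz : z ∈ SigmaEx) :
    ∃ v ∈ GammaT1, (fun j => v j 0) = z := by
  rcases hz with (⟨p, hp⟩ | ⟨p, hp⟩) | hp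
  · -- z = wOneAt p, flag = wOnesThenZeros p
    subst hp
    refine ⟨pairW (wOneAt p) (wOnesThenZeros p), ?_, by funext j; simp [pairW]⟩
    apply pairW_in_gamma <;> intro i <;>
      simp only [wOneAt, wOnesThenZeros, ite10_eq_one, ite10_eq_zero] <;> omega
  · -- z = wOnesThenZeros p, flag = wOnesThenZeros (p-1)
    subst hp
    refine ⟨pairW (wOnesThenZeros p) (wOnesThenZeros (p-1)), ?_, by funext j; simp [pairW]⟩
    apply pairW_in_gamma <;> intro i <;>
      simp only [wOnesThenZeros, ite10_eq_one, ite10_eq_zero] <;> omega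
  · -- z = wOnes, flag = wOnes
    rw [Set.mem_singleton_iff] at hp
    subst hp
    refine ⟨pairW wOnes wOnes, ?_, by funext j; simp [pairW]⟩
    apply pairW_in_gamma <;> intro i <;> simp [wOnes]

lemma is_t1 : IsT1 SigmaEx := by
  refine ⟨2, by omega, GammaT1, ⟨FbT1, rfl⟩, ?_, ?_⟩
  · -- proj 0 '' Γ = SigmaEx
    apply Set.eq_of_subset_of_subset
    · rintro z ⟨v, hv, rfl⟩
      exact gamma_proj0_mem v hv
    · intro z hz
      obtain ⟨v, hvΓ, hveq⟩ := surj_onto_SigmaEx z hz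
      exact ⟨v, hvΓ, hveq⟩
  · -- projAll Γ = SigmaEx
    apply Set.eq_of_subset_of_subset
    · intro z hz
      rw [projAll, Set.mem_iUnion] at hz
      obtain ⟨q, v, hv, rfl⟩ := hz
      rcases fin2_cases q with hq | hq
      · subst hq; exact gamma_proj0_mem v hv
      · subst hq
        apply mono_mem_SigmaEx
        intro i hi
        rw [gamma_mem_iff] at hv
        exact (hv i).1 hi
    · intro z hz
      rw [projAll, Set.mem_iUnion]
      obtain ⟨v, hvΓ, hveq⟩ := surj_onto_SigmaEx z hz
      exact ⟨0, v, hvΓ, hveq⟩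

end T1Part

section T3Part

lemma is_t3 : IsT3 SigmaEx := by
  refine ⟨fun _ => 0, ?_, [1], by simp, ⟨1, by simp, ?_⟩, wOnes, mem_SigmaEx_ones, ?_, ?_⟩
  · intro a
    rcases fin2_cases a with ha | ha <;> subst ha
    · left; right; refine ⟨0, funext fun j => ?_⟩
      cases j with
      | zero => simp [wOnesThenZeros]
      | succ n => rw [Function.iterate_succ_apply']; simp [wOnesThenZeros]
    · left; left; refine ⟨0, funext fun j => ?_⟩
      cases j with
      | zero => simp [wOneAt]
      | succ n => rw [Function.iterate_succ_apply']; simp [wOneAt]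
  · rintro ⟨x, hx⟩
    simp at hx
  · intro j; rfl
  · intro i
    fin_cases i
    rfl

end T3Part

section TracePart

/-- The local rule: a cell becomes 1 iff it sees 0110 or 1111 to its right. -/
def ruleF : (ℤ → Fin 2) → (ℤ → Fin 2) := fun x i =>
  if (x i = 0 ∧ x (i+1) = 1 ∧ x (i+2) = 1 ∧ x (i+3) = 0) ∨
     (x i = 1 ∧ x (i+1) = 1 ∧ x (i+2) = 1 ∧ x (i+3) = 1) then 1 else 0

lemma ruleF_one_iff (y : ℤ → Fin 2) (i : ℤ) :
    ruleF y i = 1 ↔ ((y i = 0 ∧ y (i+1) = 1 ∧ y (i+2) = 1 ∧ y (i+3) = 0) ∨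
     (y i = 1 ∧ y (i+1) = 1 ∧ y (i+2) = 1 ∧ y (i+3) = 1)) := by
  simp only [ruleF, ite10_eq_one]

lemma ruleF_isCA : IsCA ruleF := by
  constructor
  · apply continuous_pi
    intro i
    have heq : (fun x => ruleF x i) =
        (fun v : (Fin 2) × (Fin 2) × (Fin 2) × (Fin 2) =>
          if (v.1 = 0 ∧ v.2.1 = 1 ∧ v.2.2.1 = 1 ∧ v.2.2.2 = 0) ∨
             (v.1 = 1 ∧ v.2.1 = 1 ∧ v.2.2.1 = 1 ∧ v.2.2.2 = 1) then (1:Fin 2) else 0) ∘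
        (fun x : ℤ → Fin 2 => (x i, x (i+1), x (i+2), x (i+3))) := rfl
    rw [heq]
    exact Continuous.comp continuous_of_discreteTopology
      (Continuous.prodMk (continuous_apply i) (Continuous.prodMk (continuous_apply (i+1))
        (Continuous.prodMk (continuous_apply (i+2)) (continuous_apply (i+3)))))
  · intro x
    funext i
    show ruleF (shiftZ x) i = ruleF x (i+1)
    simp only [ruleF, shiftZ, show i+2+1 = i+1+2 from by ring, show i+3+1 = i+1+3 from by ring]

/-- Two adjacent ones in the image force five ones. -/
lemma oneone (y : ℤ → Fin 2) (m : ℤ) (h1 : ruleF y m = 1) (h2 : ruleF y (m+1) = 1) :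
    ∀ j, m ≤ j → j ≤ m + 4 → y j = 1 := by
  rw [ruleF_one_iff] at h1 h2
  rw [show m+1+1 = m+2 by ring, show m+1+2 = m+3 by ring, show m+1+3 = m+4 by ring] at h2
  intro j hj1 hj2
  have hcase : j = m ∨ j = m+1 ∨ j = m+2 ∨ j = m+3 ∨ j = m+4 := by omega
  rcases h1 with ⟨a0, a1, a2, a3⟩ | ⟨a0, a1, a2, a3⟩ <;>
    rcases h2 with ⟨b0, b1, b2, b3⟩ | ⟨b0, b1, b2, b3⟩ <;>
    rcases hcase with rfl | rfl | rfl | rfl | rfl <;> omega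

/-- The dangerous patterns: a run of ones which will eventually put a 1 at the origin. -/
def Pk (k : ℕ) (y : ℤ → Fin 2) : Prop :=
  y 0 = 0 ∧ (∀ m : ℤ, 1 ≤ m → m ≤ 3*(k:ℤ)+2 → y m = 1) ∧ y (3*(k:ℤ)+3) = 0

/-- Safe configurations: the origin stays 0 forever. -/
def Ngood (y : ℤ → Fin 2) : Prop := y 0 = 0 ∧ ∀ k : ℕ, ¬ Pk k y

lemma stepN (y : ℤ → Fin 2) (hN : Ngood y) : Ngood (ruleF y) := by
  obtain ⟨hy0, hP⟩ := hN
  have hz : ruleF y 0 = 0 := by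
    rcases fin2_cases (ruleF y 0) with h | h
    · exact h
    · exfalso
      rw [ruleF_one_iff] at h
      norm_num at h
      rcases h with ⟨c0, c1, c2, c3⟩ | ⟨c0, c1, c2, c3⟩
      · refine hP 0 ⟨hy0, ?_, ?_⟩
        · intro m hm1 hm2
          have hm : m = 1 ∨ m = 2 := by push_cast at hm2; omega
          rcases hm with rfl | rfl <;> assumption
        · push_cast
          norm_num
          exact c3
      · omega
  refine ⟨hz, fun k hPk => ?_⟩
  obtain ⟨hw0, hones, hend⟩ := hPk
  -- all the ruleF-ones in [1, 3k+2] force y-ones in [1, 3k+5]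
  have yall : ∀ j : ℤ, 1 ≤ j → j ≤ 3*(k:ℤ)+5 → y j = 1 := by
    intro j hj1 hj2
    rcases le_or_gt j (3*(k:ℤ)+1) with hle | hlt
    · exact oneone y j (hones j hj1 (by omega)) (hones (j+1) (by omega) (by omega)) j
        (by omega) (by omega)
    · exact oneone y (3*(k:ℤ)+1) (hones _ (by omega) (by omega))
        (hones _ (by omega) (by omega)) j (by omega) (by omega)
  -- the boundary: ruleF y (3k+3) = 0 forces y (3k+6) = 0
  have hb : y (3*(k:ℤ)+6) = 0 := by
    rcases fin2_cases (y (3*(k:ℤ)+6)) with h | h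
    · exact h
    · exfalso
      have : ruleF y (3*(k:ℤ)+3) = 1 := by
        rw [ruleF_one_iff]
        right
        refine ⟨yall _ (by omega) (by omega), yall _ (by omega) (by omega),
          yall _ (by omega) (by omega), ?_⟩
        rw [show 3*(k:ℤ)+3+3 = 3*(k:ℤ)+6 by ring]; exact h
      omega
  exact hP (k+1) ⟨hy0, by intro m h1 h2; push_cast at h2 ⊢; exact yall m h1 (by omega),
    by push_cast; rw [show 3*((k:ℤ)+1)+3 = 3*(k:ℤ)+6 by ring]; exact hb⟩

lemma Nzero_forever (y : ℤ → Fin 2) (hN : Ngood y) : ∀ n : ℕ, (ruleF^[n] y) 0 = 0 := by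
  have : ∀ n : ℕ, Ngood (ruleF^[n] y) := by
    intro n
    induction n with
    | zero => exact hN
    | succ n ih => rw [Function.iterate_succ_apply']; exact stepN _ ih
  exact fun n => (this n).1

lemma descentN (y : ℤ → Fin 2) (h1 : y 0 = 1) (h0 : ruleF y 0 = 0) : Ngood (ruleF y) := by
  refine ⟨h0, fun k hPk => ?_⟩
  obtain ⟨-, hones, -⟩ := hPk
  have h5 := oneone y 1 (hones 1 (by omega) (by omega)) (hones 2 (by omega) (by omega))
  have : ruleF y 0 = 1 := by
    rw [ruleF_one_iff]
    right
    norm_num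
    exact ⟨h1, h5 1 (by omega) (by omega), h5 2 (by omega) (by omega), h5 3 (by omega) (by omega)⟩
  omega

lemma ascentN (y : ℤ → Fin 2) (h0 : y 0 = 0) (h1 : ruleF y 0 = 1) :
    ruleF (ruleF y) 0 = 0 ∧ Ngood (ruleF (ruleF y)) := by
  have hpat := (ruleF_one_iff y 0).mp h1
  norm_num at hpat
  rcases hpat with ⟨-, p1, p2, p3⟩ | ⟨p0, -⟩
  · have hw0 : ruleF (ruleF y) 0 = 0 := by
      rcases fin2_cases (ruleF (ruleF y) 0) with h | h
      · exact h
      · exfalso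
        rw [ruleF_one_iff] at h
        norm_num at h
        rcases h with ⟨c0, -⟩ | ⟨-, c1, c2, -⟩
        · omega
        · have h5 := oneone y 1 c1 (by rw [show (1:ℤ)+1 = 2 by ring]; exact c2)
          have := h5 3 (by omega) (by omega)
          omega
    exact ⟨hw0, descentN (ruleF y) h1 hw0⟩
  · omega

/-- All traces of ruleF are in SigmaEx. -/
lemma trace_mem (x : ℤ → Fin 2) : caTrace ruleF x ∈ SigmaEx := by
  apply mem_SigmaEx_of_char
  · -- descent
    intro i hi hi1 j
    have hi1' : ruleF^[i+1] x 0 = 0 := hi1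
    rw [Function.iterate_succ_apply'] at hi1'
    have hN := descentN (ruleF^[i] x) hi hi1'
    show (ruleF^[i+1+j] x) 0 = 0
    rw [show i+1+j = j + (i+1) by omega, Function.iterate_add_apply,
      Function.iterate_succ_apply']
    exact Nzero_forever _ hN j
  · -- ascent
    intro i hi hi1 j
    have hi1' : ruleF^[i+1] x 0 = 1 := hi1
    rw [Function.iterate_succ_apply'] at hi1'
    obtain ⟨hw0, hN⟩ := ascentN (ruleF^[i] x) hi hi1'
    show (ruleF^[i+2+j] x) 0 = 0
    rw [show i+2+j = j + (i+2) by omega, Function.iterate_add_apply,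
      show i+2 = (i+1)+1 by omega, Function.iterate_succ_apply',
      Function.iterate_succ_apply']
    exact Nzero_forever _ hN j

-- Explicit configurations realizing every element of SigmaEx
def cfgL (b : ℤ) : ℤ → Fin 2 := fun i => if i ≤ b then 1 else 0
def cfgB (m : ℤ) : ℤ → Fin 2 := fun i => if 1 ≤ i ∧ i ≤ m then 1 else 0
def cfgS : ℤ → Fin 2 := fun i => if i = 0 then 1 else 0
def cfg0 : ℤ → Fin 2 := fun _ => 0
def cfg1 : ℤ → Fin 2 := fun _ => 1

lemma ruleF_cfgL (b : ℤ) : ruleF (cfgL b) = cfgL (b-3) := by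
  funext i
  simp only [ruleF, cfgL, ite10_eq_one, ite10_eq_zero]
  split_ifs with h1 h2 h2 <;> first | rfl | (exfalso; omega)

lemma ruleF_cfgB (m : ℤ) (hm : 5 ≤ m) : ruleF (cfgB m) = cfgB (m-3) := by
  funext i
  simp only [ruleF, cfgB, ite10_eq_one, ite10_eq_zero]
  split_ifs with h1 h2 h2 <;> first | rfl | (exfalso; omega)

lemma ruleF_cfgB2 : ruleF (cfgB 2) = cfgS := by
  funext i
  simp only [ruleF, cfgB, cfgS, ite10_eq_one, ite10_eq_zero]
  split_ifs with h1 h2 h2 <;> first | rfl | (exfalso; omega)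

lemma ruleF_cfgS : ruleF cfgS = cfg0 := by
  funext i
  simp only [ruleF, cfgS, cfg0, ite10_eq_one, ite10_eq_zero]
  omega

lemma ruleF_cfg0 : ruleF cfg0 = cfg0 := by
  funext i
  simp [ruleF, cfg0]

lemma ruleF_cfg1 : ruleF cfg1 = cfg1 := by
  funext i
  simp [ruleF, cfg1]

lemma iter_cfgL (b : ℤ) (n : ℕ) : ruleF^[n] (cfgL b) = cfgL (b - 3*(n:ℤ)) := by
  induction n with
  | zero => simp [cfgL]
  | succ n ih =>
    rw [Function.iterate_succ_apply', ih, ruleF_cfgL]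
    congr 1
    push_cast
    ring

/-- Realizing wOnes. -/
lemma trace_ones : caTrace ruleF cfg1 = wOnes := by
  funext j
  show (ruleF^[j] cfg1) 0 = 1
  rw [Function.iterate_fixed ruleF_cfg1 j]
  rfl

/-- Realizing wOnesThenZeros p. -/
lemma trace_otz (p : ℕ) : caTrace ruleF (cfgL (3*(p:ℤ) - 3)) = wOnesThenZeros p := by
  funext j
  show (ruleF^[j] (cfgL (3*(p:ℤ)-3))) 0 = wOnesThenZeros p j
  rw [iter_cfgL]
  simp only [cfgL, wOnesThenZeros]
  split_ifs with h1 h2 h2 <;> first | rfl | (exfalso; omega)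

/-- Realizing wOneAt 0. -/
lemma trace_oneAt0 : caTrace ruleF cfgS = wOneAt 0 := by
  funext j
  show (ruleF^[j] cfgS) 0 = wOneAt 0 j
  cases j with
  | zero => simp [cfgS, wOneAt]
  | succ n =>
    rw [Function.iterate_succ_apply, ruleF_cfgS, Function.iterate_fixed ruleF_cfg0 n]
    simp [cfg0, wOneAt]

lemma iter_cfgB (p : ℕ) (hp : 1 ≤ p) (t : ℕ) (ht : t < p) :
    ruleF^[t] (cfgB (3*(p:ℤ)-1)) = cfgB (3*(p:ℤ)-1-3*(t:ℤ)) := by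
  induction t with
  | zero => simp
  | succ t ih =>
    rw [Function.iterate_succ_apply', ih (by omega), ruleF_cfgB _ (by push_cast; omega)]
    congr 1
    push_cast
    ring

/-- Realizing wOneAt p for p ≥ 1. -/
lemma trace_oneAt (p : ℕ) (hp : 1 ≤ p) : caTrace ruleF (cfgB (3*(p:ℤ)-1)) = wOneAt p := by
  obtain ⟨q, rfl⟩ : ∃ q, p = q + 1 := ⟨p - 1, by omega⟩
  set p := q + 1 with hpdef
  have hiterp : ruleF^[p] (cfgB (3*(p:ℤ)-1)) = cfgS := by
    have h1 : ruleF^[q] (cfgB (3*(p:ℤ)-1)) = cfgB 2 := by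
      rw [iter_cfgB p hp q (by omega)]
      congr 1
      push_cast
      rw [hpdef]; push_cast; ring
    rw [show p = q + 1 from rfl, Function.iterate_succ_apply', h1, ruleF_cfgB2]
  funext j
  show (ruleF^[j] (cfgB (3*(p:ℤ)-1))) 0 = wOneAt p j
  rcases Nat.lt_trichotomy j p with h | h | h
  · rw [iter_cfgB p hp j h]
    simp only [cfgB, wOneAt]
    rw [if_neg (by omega), if_neg (by omega)]
  · subst h
    rw [hiterp]
    simp [cfgS, wOneAt]
  · rw [show j = (j - (p+1)) + 1 + p by omega]
    rw [Function.iterate_add_apply, hiterp, Function.iterate_succ_apply, ruleF_cfgS,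
      Function.iterate_fixed ruleF_cfg0]
    simp only [cfg0, wOneAt]
    rw [if_neg (by omega)]

lemma traceable_sigma : Traceable SigmaEx := by
  refine ⟨ruleF, ruleF_isCA, Set.eq_of_subset_of_subset ?_ ?_⟩
  · rintro c ⟨x, rfl⟩
    exact trace_mem x
  · intro z hz
    rcases hz with (⟨p, hp⟩ | ⟨p, hp⟩) | hp
    · subst hp
      rcases Nat.eq_zero_or_pos p with h | h
      · subst h; exact ⟨cfgS, trace_oneAt0⟩
      · exact ⟨cfgB (3*(p:ℤ)-1), trace_oneAt p h⟩
    · subst hp; exact ⟨cfgL (3*(p:ℤ)-3), trace_otz p⟩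
    · rw [Set.mem_singleton_iff] at hp; subst hp; exact ⟨cfg1, trace_ones⟩

end TracePart


/-- The subshift `(0^*1 + 1^*)0^ω` is neither an SFT nor T2, but it is
T1 and T3; consequently it is traceable. -/
theorem stmt14 :
    ¬ IsSFT SigmaEx ∧ ¬ IsT2 SigmaEx ∧ IsT1 SigmaEx ∧ IsT3 SigmaEx ∧ Traceable SigmaEx := by
  exact ⟨not_sft, not_t2, is_t1, is_t3, traceable_sigma⟩
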